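/- arXiv:1504.02441 — 2 statements merged into one kernel-verified Lean document; each statement's English description precedes it below -/
import Mathlib

section
/- For any pQTSs A_i and A_s, trace distribution inclusion implies pioco: if trd(A_i) ⊆ trd(A_s) (meaning every trace distribution of A_i is matched by one of A_s assigning equal probabilities to all finite traces), then A_i ⊑_pioco A_s. -/
noncomputable section
attribute [local instance] Classical.propDecidable

structure pQTS (S L T : Type) [Fintype S] [Fintype L] [Fintype T] where
  init : S
  inputs : Set L
  delta : L
  delta_not_input : delta ∉ inputs
  src : T → S
  dist : T → L × S → ℝ
  dist_nonneg : ∀ t x, 0 ≤ dist t x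
  dist_sum : ∀ t, ∑ x, dist t x = 1
  input_reactive : ∀ t (a : L) (s' : S), a ∈ inputs → 0 < dist t (a, s') →
    ∀ (b : L) (s'' : S), b ≠ a → dist t (b, s'') = 0

variable {S L T : Type} [Fintype S] [Fintype L] [Fintype T]

/-- A step of a path: the transition (distribution) taken, the action, the target state. -/
abbrev PStep (S L T : Type) := T × L × S

/-- A finite path, stored with the most recent step first. -/
abbrev PPath (S L T : Type) := List (PStep S L T)

def lastState (A : pQTS S L T) : PPath S L T → S
  | [] => A.init
  | x :: _ => x.2.2

def ValidPath (A : pQTS S L T) : PPath S L T → Prop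
  | [] => True
  | x :: π => ValidPath A π ∧ A.src x.1 = lastState A π ∧ 0 < A.dist x.1 (x.2.1, x.2.2)

def ptrace : PPath S L T → List L
  | [] => []
  | x :: π => ptrace π ++ [x.2.1]

/-- A (partial, randomized, history-dependent) adversary: to each finite path it assigns
a distribution over the available transitions (`some t`) plus halting (`none`). -/
def IsAdversary (A : pQTS S L T) (E : PPath S L T → Option T → ℝ) : Prop :=
  (∀ π o, 0 ≤ E π o) ∧
  (∀ π t, 0 < E π (some t) → A.src t = lastState A π) ∧
  (∀ π, E π none + ∑ t, E π (some t) = 1)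

/-- The path probability function `Q^E`. -/
def Qprob (A : pQTS S L T) (E : PPath S L T → Option T → ℝ) : PPath S L T → ℝ
  | [] => 1
  | x :: π => Qprob A E π * E π (some x.1) * A.dist x.1 (x.2.1, x.2.2)

def pathsOfLength (A : pQTS S L T) : ℕ → Finset (PPath S L T)
  | 0 => {[]}
  | n + 1 => (pathsOfLength A n).biUnion
      (fun π => Finset.univ.image (fun x : PStep S L T => x :: π))

/-- The cone probability `P_H(C_σ)` of a finite trace σ under the trace distribution of `E`. -/
def traceProb (A : pQTS S L T) (E : PPath S L T → Option T → ℝ) (σ : List L) : ℝ :=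
  ∑ π ∈ (pathsOfLength A σ.length).filter (fun π => ValidPath A π ∧ ptrace π = σ),
    Qprob A E π

def haltsAfter (E : PPath S L T → Option T → ℝ) (k : ℕ) : Prop :=
  ∀ π : PPath S L T, k ≤ π.length → E π none = 1

/-- `trd A k`: trace distributions of adversaries of `A` halting after `k` steps,
represented by their cone probability functions on finite traces. -/
def trd (A : pQTS S L T) (k : ℕ) : Set (List L → ℝ) :=
  {f | ∃ E, IsAdversary A E ∧ haltsAfter E k ∧ ∀ σ, f σ = traceProb A E σ}

/-- `trdAll A`: all trace distributions of `A`. -/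
def trdAll (A : pQTS S L T) : Set (List L → ℝ) :=
  {f | ∃ E, IsAdversary A E ∧ ∀ σ, f σ = traceProb A E σ}

/-- `H ⊑_k H'` : the two trace distributions agree on all traces of length `k`. -/
def prefixTD (L : Type) (k : ℕ) (H H' : List L → ℝ) : Prop :=
  ∀ σ : List L, σ.length = k → H σ = H' σ

/-- Output continuations of `H` in `A` w.r.t. length `k`. -/
def outcont (H : List L → ℝ) (A : pQTS S L T) (k : ℕ) : Set (List L → ℝ) :=
  {H' | H' ∈ trd A (k + 1) ∧ prefixTD L k H H' ∧
    ∀ (σ : List L) (a : L), σ.length = k → a ∈ A.inputs → H' (σ ++ [a]) = 0}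

def inputEnabled (A : pQTS S L T) : Prop :=
  ∀ s : S, ∀ a ∈ A.inputs, ∃ (t : T) (s' : S), A.src t = s ∧ 0 < A.dist t (a, s')

def pioco {S1 T1 S2 T2 : Type} [Fintype S1] [Fintype T1] [Fintype S2] [Fintype T2]
    (Ai : pQTS S1 L T1) (As : pQTS S2 L T2) : Prop :=
  ∀ k : ℕ, ∀ H ∈ trd As k, outcont H Ai k ⊆ outcont H As k

def Traces (A : pQTS S L T) : Set (List L) :=
  {σ | ∃ π : PPath S L T, ValidPath A π ∧ ptrace π = σ}

/-- `out_A(σ)`: outputs (including quiescence) enabled after trace σ. -/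
def outSet (A : pQTS S L T) (σ : List L) : Set L :=
  {a | a ∉ A.inputs ∧ ∃ π : PPath S L T, ValidPath A π ∧ ptrace π = σ ∧
    ∃ (t : T) (s' : S), A.src t = lastState A π ∧ 0 < A.dist t (a, s')}

def ioco {S1 T1 S2 T2 : Type} [Fintype S1] [Fintype T1] [Fintype S2] [Fintype T2]
    (Ai : pQTS S1 L T1) (As : pQTS S2 L T2) : Prop :=
  ∀ σ ∈ Traces As, outSet Ai σ ⊆ outSet As σ

/-- A (nonprobabilistic) QTS: every occurring distribution is a Dirac distribution. -/
def IsQTS (A : pQTS S L T) : Prop :=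
  ∀ t : T, ∃ x : L × S, ∀ y, A.dist t y = if y = x then 1 else 0

lemma mem_pathsOfLength_length (A : pQTS S L T) :
    ∀ n (π : PPath S L T), π ∈ pathsOfLength A n → π.length = n := by
  intro n
  induction n with
  | zero => intro π h; simp [pathsOfLength] at h; simp [h]
  | succ n ih =>
    intro π h
    simp only [pathsOfLength, Finset.mem_biUnion, Finset.mem_image, Finset.mem_univ,
      true_and] at h
    obtain ⟨π', hπ', x, hx⟩ := h
    subst hx; simp [ih π' hπ']

lemma adv_some_zero {A : pQTS S L T} {E : PPath S L T → Option T → ℝ}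
    (hE : IsAdversary A E) {π : PPath S L T} (h1 : E π none = 1) (t : T) :
    E π (some t) = 0 := by
  have hsum := hE.2.2 π
  rw [h1] at hsum
  have hz : ∑ t, E π (some t) = 0 := by linarith
  exact (Finset.sum_eq_zero_iff_of_nonneg (fun t _ => hE.1 π (some t))).mp hz t
    (Finset.mem_univ t)

lemma qprob_zero {A : pQTS S L T} {E : PPath S L T → Option T → ℝ}
    (hE : IsAdversary A E) {K : ℕ} (hh : haltsAfter E K)
    {π : PPath S L T} (h : K < π.length) : Qprob A E π = 0 := by
  cases π with
  | nil => simp at h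
  | cons x π' =>
    have hl : K ≤ π'.length := by simp at h; omega
    have : E π' (some x.1) = 0 := adv_some_zero hE (hh π' hl) _
    simp [Qprob, this]

lemma traceProb_zero {A : pQTS S L T} {E : PPath S L T → Option T → ℝ}
    (hE : IsAdversary A E) {K : ℕ} (hh : haltsAfter E K)
    {σ : List L} (h : K < σ.length) : traceProb A E σ = 0 := by
  unfold traceProb
  apply Finset.sum_eq_zero
  intro π hπ
  have := mem_pathsOfLength_length A σ.length π (Finset.mem_filter.mp hπ).1
  exact qprob_zero hE hh (by omega)

lemma qprob_congr {A : pQTS S L T} {E E' : PPath S L T → Option T → ℝ} {N : ℕ}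
    (h : ∀ π : PPath S L T, π.length < N → ∀ o, E π o = E' π o) :
    ∀ π : PPath S L T, π.length ≤ N → Qprob A E π = Qprob A E' π := by
  intro π
  induction π with
  | nil => intro _; rfl
  | cons x π' ih =>
    intro hl
    have hl' : π'.length < N := by simp at hl; omega
    simp [Qprob, ih hl'.le, h π' hl']

theorem stmt9 {S1 T1 S2 T2 : Type} [Fintype S1] [Fintype T1] [Fintype S2] [Fintype T2]
    (Ai : pQTS S1 L T1) (As : pQTS S2 L T2)
    (hin : Ai.inputs = As.inputs) (hdel : Ai.delta = As.delta)
    (hTD : trdAll Ai ⊆ trdAll As) :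
    pioco Ai As := by
  intro k H hH H' hH'
  obtain ⟨hH'trd, hpre, hinp⟩ := hH'
  obtain ⟨Ei, hEi, hEihalt, hEiP⟩ := hH'trd
  have hH'all : H' ∈ trdAll Ai := ⟨Ei, hEi, hEiP⟩
  obtain ⟨E', hE', hE'P⟩ := hTD hH'all
  set E'' : PPath S2 L T2 → Option T2 → ℝ :=
    fun π o => if k + 1 ≤ π.length then (if o = none then 1 else 0) else E' π o
    with hE''def
  have hE''eq : ∀ π : PPath S2 L T2, π.length < k + 1 → ∀ o, E' π o = E'' π o := by
    intro π hπ o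
    simp only [hE''def, if_neg (Nat.not_le.mpr hπ)]
  have hadv : IsAdversary As E'' := by
    refine ⟨?_, ?_, ?_⟩
    · intro π o
      by_cases h : k + 1 ≤ π.length
      · simp only [hE''def, if_pos h]
        split <;> norm_num
      · simpa only [hE''def, if_neg h] using hE'.1 π o
    · intro π t ht
      by_cases h : k + 1 ≤ π.length
      · simp [hE''def, h, (by omega : k < π.length)] at ht
      · simp only [hE''def, if_neg h] at ht
        exact hE'.2.1 π t ht
    · intro π
      by_cases h : k + 1 ≤ π.length
      · simp [hE''def, h, (by omega : k < π.length)]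
      · simp only [hE''def, if_neg h]
        exact hE'.2.2 π
  have hhalt : haltsAfter E'' (k + 1) := by
    intro π h; simp [hE''def, h, (by omega : k < π.length)]
  have hagree : ∀ σ, H' σ = traceProb As E'' σ := by
    intro σ
    by_cases hlen : σ.length ≤ k + 1
    · rw [hE'P σ]
      unfold traceProb
      apply Finset.sum_congr rfl
      intro π hπ
      have hπlen : π.length = σ.length :=
        mem_pathsOfLength_length As σ.length π (Finset.mem_filter.mp hπ).1
      exact qprob_congr hE''eq π (by omega)
    · rw [hEiP σ, traceProb_zero hEi hEihalt (by omega),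
        traceProb_zero hadv hhalt (by omega)]
  refine ⟨⟨E'', hadv, hhalt, hagree⟩, hpre, ?_⟩
  intro σ a hσ ha
  exact hinp σ a hσ (hin ▸ ha)
end
end

section
/- pioco is transitive on input-enabled premises: if A and B are input-enabled pQTSs and A ⊑_pioco B and B ⊑_pioco C, then A ⊑_pioco C. -/
noncomputable section
attribute [local instance] Classical.propDecidable

variable {S L T : Type} [Fintype S] [Fintype L] [Fintype T]

theorem mem_pathsOfLength (A : pQTS S L T) (n : ℕ) (π : PPath S L T) :
    π ∈ pathsOfLength A n ↔ π.length = n := by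
  induction n generalizing π with
  | zero => simp [pathsOfLength, List.length_eq_zero_iff]
  | succ n ih =>
    simp only [pathsOfLength, Finset.mem_biUnion, Finset.mem_image, Finset.mem_univ, true_and]
    constructor
    · rintro ⟨π', hπ', x, rfl⟩
      simp [(ih π').mp hπ']
    · intro h
      cases π with
      | nil => simp at h
      | cons x π' => exact ⟨π', (ih π').mpr (by simpa using h), x, rfl⟩

theorem Qprob_nonneg (A : pQTS S L T) (E : PPath S L T → Option T → ℝ)
    (hE : IsAdversary A E) (π : PPath S L T) : 0 ≤ Qprob A E π := by
  induction π with
  | nil => norm_num [Qprob]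
  | cons x π ih => exact mul_nonneg (mul_nonneg ih (hE.1 _ _)) (A.dist_nonneg _ _)

theorem traceProb_nonneg (A : pQTS S L T) (E : PPath S L T → Option T → ℝ)
    (hE : IsAdversary A E) (σ : List L) : 0 ≤ traceProb A E σ :=
  Finset.sum_nonneg fun π _ => Qprob_nonneg A E hE π

theorem some_sum_eq (A : pQTS S L T) (E : PPath S L T → Option T → ℝ)
    (hE : IsAdversary A E) (π : PPath S L T) :
    ∑ t, E π (some t) = 1 - E π none := by
  have := hE.2.2 π; linarith

theorem some_eq_zero_of_halt (A : pQTS S L T) (E : PPath S L T → Option T → ℝ)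
    (hE : IsAdversary A E) (π : PPath S L T) (h : E π none = 1) (t : T) :
    E π (some t) = 0 := by
  have h0 : ∑ t, E π (some t) = 0 := by rw [some_sum_eq A E hE, h]; ring
  have := (Finset.sum_eq_zero_iff_of_nonneg (fun t _ => hE.1 π (some t))).mp h0
  exact this t (Finset.mem_univ t)

theorem Qprob_congr (A : pQTS S L T) (E E' : PPath S L T → Option T → ℝ) (n : ℕ)
    (h : ∀ π : PPath S L T, π.length < n → ∀ o, E π o = E' π o) :
    ∀ π : PPath S L T, π.length ≤ n → Qprob A E π = Qprob A E' π := by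
  intro π
  induction π with
  | nil => intro _; rfl
  | cons x π ih =>
    intro hl
    simp only [List.length_cons] at hl
    simp only [Qprob]
    rw [ih (by omega), h π (by omega)]

theorem traceProb_congr (A : pQTS S L T) (E E' : PPath S L T → Option T → ℝ) (n : ℕ)
    (h : ∀ π : PPath S L T, π.length < n → ∀ o, E π o = E' π o)
    (σ : List L) (hσ : σ.length ≤ n) : traceProb A E σ = traceProb A E' σ := by
  refine Finset.sum_congr rfl fun π hπ => ?_
  have := (mem_pathsOfLength A σ.length π).mp (Finset.mem_filter.mp hπ).1
  exact Qprob_congr A E E' n h π (by omega)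

theorem traceProb_eq_zero_of_halt (A : pQTS S L T) (E : PPath S L T → Option T → ℝ)
    (hE : IsAdversary A E) (k : ℕ) (hH : haltsAfter E k)
    (σ : List L) (hσ : k < σ.length) : traceProb A E σ = 0 := by
  apply Finset.sum_eq_zero
  intro π hπ
  have hlen := (mem_pathsOfLength A σ.length π).mp (Finset.mem_filter.mp hπ).1
  cases π with
  | nil => simp at hlen; omega
  | cons x π' =>
    simp only [List.length_cons] at hlen
    have : E π' (some x.1) = 0 :=
      some_eq_zero_of_halt A E hE π' (hH π' (by omega)) x.1
    simp [Qprob, this]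

theorem snoc_inj {L : Type} {l l' : List L} {a b : L} :
    l ++ [a] = l' ++ [b] ↔ l = l' ∧ a = b := by
  constructor
  · intro h
    have := List.append_inj' h rfl
    simpa using this
  · rintro ⟨rfl, rfl⟩; rfl

theorem dist_label_sum (A : pQTS S L T) (t : T) :
    ∑ c : L, ∑ s' : S, A.dist t (c, s') = 1 := by
  rw [← Fintype.sum_prod_type]; exact A.dist_sum t

theorem input_weight_zero (A : pQTS S L T) (t : T) (a : L) (ha : a ∈ A.inputs)
    (s₀ : S) (h : 0 < A.dist t (a, s₀)) (c : L) (hc : c ≠ a) :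
    ∑ s' : S, A.dist t (c, s') = 0 :=
  Finset.sum_eq_zero fun s' _ => A.input_reactive t a s₀ ha h c s' hc

theorem input_weight_one (A : pQTS S L T) (t : T) (a : L) (ha : a ∈ A.inputs)
    (s₀ : S) (h : 0 < A.dist t (a, s₀)) :
    ∑ s' : S, A.dist t (a, s') = 1 := by
  have h1 := dist_label_sum A t
  rw [Finset.sum_eq_single a (fun c _ hc => input_weight_zero A t a ha s₀ h c hc)
    (fun hc => absurd (Finset.mem_univ a) hc)] at h1
  exact h1
theorem key_identity (A : pQTS S L T) (E : PPath S L T → Option T → ℝ)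
    (hE : IsAdversary A E) (σ : List L) (c : L) :
    traceProb A E (σ ++ [c]) =
      ∑ π ∈ (pathsOfLength A σ.length).filter
          (fun π => ValidPath A π ∧ ptrace π = σ),
        Qprob A E π * ∑ t, E π (some t) * ∑ s' : S, A.dist t (c, s') := by
  have hlen : (σ ++ [c]).length = σ.length + 1 := by simp
  rw [traceProb, hlen, Finset.sum_filter, Finset.sum_filter]
  show ∑ π ∈ pathsOfLength A (σ.length + 1), _ = _
  rw [pathsOfLength, Finset.sum_biUnion]
  · refine Finset.sum_congr rfl fun π hπ => ?_
    rw [Finset.sum_image (by intro a _ b _ h; simpa using h)]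
    by_cases hv : ValidPath A π ∧ ptrace π = σ
    · rw [if_pos hv]
      have hstep : ∀ x : PStep S L T,
          (if ValidPath A (x :: π) ∧ ptrace (x :: π) = σ ++ [c] then Qprob A E (x :: π) else 0)
          = if x.2.1 = c then Qprob A E π * E π (some x.1) * A.dist x.1 (c, x.2.2) else 0 := by
        intro x
        have hcond : (ValidPath A (x :: π) ∧ ptrace (x :: π) = σ ++ [c]) ↔
            (A.src x.1 = lastState A π ∧ 0 < A.dist x.1 (x.2.1, x.2.2) ∧ x.2.1 = c) := by
          constructor
          · rintro ⟨⟨_, h1, h2⟩, h3⟩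
            simp only [ptrace, hv.2] at h3
            exact ⟨h1, h2, (snoc_inj.mp h3).2⟩
          · rintro ⟨h1, h2, h3⟩
            exact ⟨⟨hv.1, h1, h2⟩, by simp [ptrace, hv.2, h3]⟩
        rw [if_congr hcond rfl rfl]
        by_cases h3 : x.2.1 = c
        · by_cases h1 : A.src x.1 = lastState A π
          · by_cases h2 : 0 < A.dist x.1 (x.2.1, x.2.2)
            · rw [if_pos ⟨h1, h2, h3⟩, if_pos h3, Qprob, h3]
            · have : A.dist x.1 (x.2.1, x.2.2) = 0 :=
                le_antisymm (not_lt.mp h2) (A.dist_nonneg _ _)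
              rw [if_neg (by tauto), if_pos h3, ← h3, this, mul_zero]
          · have : E π (some x.1) = 0 := by
              by_contra h
              exact h1 (hE.2.1 π x.1 (lt_of_le_of_ne (hE.1 π _) (Ne.symm h)))
            rw [if_neg (by tauto), if_pos h3, this, mul_zero, zero_mul]
        · rw [if_neg (by tauto), if_neg h3]
      rw [Finset.sum_congr rfl fun x _ => hstep x]
      rw [Finset.mul_sum]
      rw [Fintype.sum_prod_type]
      refine Finset.sum_congr rfl fun t _ => ?_
      rw [Fintype.sum_prod_type]
      rw [Finset.sum_eq_single c ?_ (fun hc => absurd (Finset.mem_univ c) hc)]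
      · simp only [if_pos rfl, if_true]
        rw [Finset.mul_sum, Finset.mul_sum]
        exact Finset.sum_congr rfl fun s _ => by ring
      · intro b _ hb
        apply Finset.sum_eq_zero
        intro s _
        rw [if_neg hb]
    · rw [if_neg hv]
      apply Finset.sum_eq_zero
      intro x _
      rw [if_neg]
      rintro ⟨h1, h2⟩
      apply hv
      refine ⟨h1.1, ?_⟩
      simp only [ptrace] at h2
      exact (snoc_inj.mp h2).1
  · intro π1 h1 π2 h2 hne
    simp only [Finset.disjoint_left, Finset.mem_image]
    rintro a ⟨x, _, rfl⟩ ⟨y, _, hy⟩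
    exact hne (by simpa using ((List.cons.injEq _ _ _ _ ▸ hy).2).symm)
theorem halting_mass (A : pQTS S L T) (E : PPath S L T → Option T → ℝ)
    (hE : IsAdversary A E) (σ : List L) :
    ∑ π ∈ (pathsOfLength A σ.length).filter
        (fun π => ValidPath A π ∧ ptrace π = σ),
      Qprob A E π * E π none
      = traceProb A E σ - ∑ c : L, traceProb A E (σ ++ [c]) := by
  have h1 : ∑ c : L, traceProb A E (σ ++ [c]) =
      ∑ π ∈ (pathsOfLength A σ.length).filter
          (fun π => ValidPath A π ∧ ptrace π = σ),
        Qprob A E π * ∑ t, E π (some t) := by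
    rw [Finset.sum_congr rfl fun c _ => key_identity A E hE σ c, Finset.sum_comm]
    refine Finset.sum_congr rfl fun π _ => ?_
    rw [← Finset.mul_sum]
    congr 1
    rw [Finset.sum_comm]
    refine Finset.sum_congr rfl fun t _ => ?_
    rw [← Finset.mul_sum, dist_label_sum, mul_one]
  rw [h1, traceProb, ← Finset.sum_sub_distrib]
  refine Finset.sum_congr rfl fun π _ => ?_
  rw [some_sum_eq A E hE]
  ring
theorem traceProb_nil (A : pQTS S L T) (E : PPath S L T → Option T → ℝ) :
    traceProb A E [] = 1 := by
  rw [traceProb]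
  show ∑ π ∈ Finset.filter _ {([] : PPath S L T)}, _ = 1
  rw [Finset.filter_singleton, if_pos ⟨trivial, rfl⟩, Finset.sum_singleton]
  rfl

theorem trd_mono {S1 T1 S2 T2 : Type} [Fintype S1] [Fintype T1] [Fintype S2] [Fintype T2]
    (A : pQTS S1 L T1) (B : pQTS S2 L T2) (hin : A.inputs = B.inputs)
    (hB : inputEnabled B) (hAB : pioco A B) : ∀ k, trd A k ⊆ trd B k := by
  intro k
  induction k with
  | zero =>
    rintro H ⟨E, hE, hhalt, hHdef⟩
    refine ⟨fun _ o => if o = none then 1 else 0, ?_, fun π _ => rfl, ?_⟩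
    · refine ⟨fun π o => by by_cases h : o = none <;> simp [h], ?_, ?_⟩
      · intro π t h; simp at h
      · intro π; simp
    · intro σ
      rw [hHdef σ]
      cases σ with
      | nil => rw [traceProb_nil, traceProb_nil]
      | cons a σ' =>
        rw [traceProb_eq_zero_of_halt A E hE 0 hhalt _ (by simp),
          traceProb_eq_zero_of_halt B _ ?_ 0 (fun π _ => rfl) _ (by simp)]
        exact ⟨fun π o => by by_cases h : o = none <;> simp [h],
          fun π t h => by simp at h, fun π => by simp⟩
  | succ k ih =>
    rintro H ⟨E, hE, hhalt, hHdef⟩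
    classical
    set Ek : PPath S1 L T1 → Option T1 → ℝ := fun π o =>
      if k ≤ π.length then (if o = none then 1 else 0) else E π o with hEk
    have hEkadv : IsAdversary A Ek := by
      refine ⟨?_, ?_, ?_⟩
      · intro π o
        by_cases h : k ≤ π.length
        · by_cases ho : o = none <;> simp [hEk, h, ho]
        · simpa [hEk, h] using hE.1 π o
      · intro π t h
        by_cases hl : k ≤ π.length
        · simp [hEk, hl] at h
        · exact hE.2.1 π t (by simpa [hEk, hl] using h)
      · intro π
        by_cases hl : k ≤ π.length
        · simp [hEk, hl]
        · simpa [hEk, hl] using hE.2.2 π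
    have hEkhalt : haltsAfter Ek k := fun π h => by simp [hEk, h]
    set isInp : T1 → Prop := fun t => ∃ a ∈ A.inputs, ∃ s', 0 < A.dist t (a, s') with hisInp
    set E' : PPath S1 L T1 → Option T1 → ℝ := fun π o =>
      if π.length = k then
        (match o with
          | some t => if isInp t then 0 else E π (some t)
          | none => 1 - ∑ t, if isInp t then 0 else E π (some t))
      else E π o with hE'def
    have hE's : ∀ π t, E' π (some t) =
        if π.length = k then (if isInp t then 0 else E π (some t)) else E π (some t) :=
      fun _ _ => rfl
    have hE'n : ∀ π, E' π none =
        if π.length = k then (1 - ∑ t, if isInp t then 0 else E π (some t)) else E π none :=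
      fun _ => rfl
    have hsum_le : ∀ π : PPath S1 L T1,
        (∑ t, if isInp t then 0 else E π (some t)) ≤ ∑ t, E π (some t) :=
      fun π => Finset.sum_le_sum fun t _ => by
        by_cases h : isInp t
        · simp [h, hE.1 π (some t)]
        · simp [h]
    have hE'adv : IsAdversary A E' := by
      refine ⟨?_, ?_, ?_⟩
      · intro π o
        cases o with
        | none =>
          rw [hE'n]
          by_cases h : π.length = k
          · rw [if_pos h]
            have h1 := hsum_le π
            have h2 := some_sum_eq A E hE π
            have h3 := hE.1 π none
            linarith
          · rw [if_neg h]; exact hE.1 π none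
        | some t =>
          rw [hE's]
          by_cases h : π.length = k
          · rw [if_pos h]
            by_cases ht : isInp t
            · simp [ht]
            · simp [ht, hE.1 π (some t)]
          · rw [if_neg h]; exact hE.1 π (some t)
      · intro π t h
        rw [hE's] at h
        by_cases hl : π.length = k
        · rw [if_pos hl] at h
          by_cases ht : isInp t
          · rw [if_pos ht] at h; exact absurd h (lt_irrefl 0)
          · rw [if_neg ht] at h; exact hE.2.1 π t h
        · rw [if_neg hl] at h; exact hE.2.1 π t h
      · intro π
        by_cases hl : π.length = k
        · have hs : ∑ t, E' π (some t) = ∑ t, if isInp t then 0 else E π (some t) :=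
            Finset.sum_congr rfl fun t _ => by rw [hE's, if_pos hl]
          rw [hE'n, if_pos hl, hs]; ring
        · have hs : ∑ t, E' π (some t) = ∑ t, E π (some t) :=
            Finset.sum_congr rfl fun t _ => by rw [hE's, if_neg hl]
          rw [hE'n, if_neg hl, hs]; exact hE.2.2 π
    have hE'halt : haltsAfter E' (k + 1) := by
      intro π h
      rw [hE'n, if_neg (by omega)]
      exact hhalt π h
    have hE'low : ∀ π : PPath S1 L T1, π.length < k → ∀ o, E' π o = E π o := by
      intro π h o
      simp only [hE'def]
      exact if_neg (by omega)
    have hEklow : ∀ π : PPath S1 L T1, π.length < k → ∀ o, Ek π o = E π o := by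
      intro π h o
      simp only [hEk]
      exact if_neg (by omega)
    have hHout_low : ∀ σ : List L, σ.length ≤ k → traceProb A E' σ = traceProb A E σ :=
      fun σ h => traceProb_congr A E' E k hE'low σ h
    have hHk_low : ∀ σ : List L, σ.length ≤ k → traceProb A Ek σ = traceProb A E σ :=
      fun σ h => traceProb_congr A Ek E k hEklow σ h
    have hHk : (fun σ => traceProb A Ek σ) ∈ trd B k :=
      ih ⟨Ek, hEkadv, hEkhalt, fun σ => rfl⟩
    have hf : ∀ σ : List L, σ.length = k → ∀ a ∈ A.inputs,
        traceProb A E' (σ ++ [a]) = 0 := by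
      intro σ hl a ha
      apply Finset.sum_eq_zero
      intro π' hπ'
      obtain ⟨hmem, hv, ht⟩ := Finset.mem_filter.mp hπ'
      have hlen := (mem_pathsOfLength A _ π').mp hmem
      cases π' with
      | nil => simp at hlen
      | cons x π =>
        obtain ⟨hvp, hsrc, hpos⟩ := hv
        have hx : x.2.1 = a := (snoc_inj.mp (by simpa [ptrace] using ht)).2
        have hinp : isInp x.1 := ⟨a, ha, x.2.2, by rwa [hx] at hpos⟩
        have hπlen : π.length = k := by
          simp only [List.length_cons, List.length_append, List.length_singleton, List.length_nil] at hlen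
          omega
        show Qprob A E' π * E' π (some x.1) * _ = 0
        rw [hE's, if_pos hπlen, if_pos hinp]
        ring
    have hg : ∀ σ : List L, σ.length = k → ∀ c, c ∉ A.inputs →
        traceProb A E' (σ ++ [c]) = traceProb A E (σ ++ [c]) := by
      intro σ hl c hc
      refine Finset.sum_congr rfl fun π' hπ' => ?_
      obtain ⟨hmem, hv, ht⟩ := Finset.mem_filter.mp hπ'
      have hlen := (mem_pathsOfLength A _ π').mp hmem
      cases π' with
      | nil => simp at hlen
      | cons x π =>
        obtain ⟨hvp, hsrc, hpos⟩ := hv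
        have hx : x.2.1 = c := (snoc_inj.mp (by simpa [ptrace] using ht)).2
        have hπlen : π.length = k := by
          simp only [List.length_cons, List.length_append, List.length_singleton, List.length_nil] at hlen
          omega
        have hnotinp : ¬ isInp x.1 := by
          rintro ⟨a, ha, s₀, hp⟩
          have hca : c ≠ a := fun h => hc (h ▸ ha)
          have := A.input_reactive x.1 a s₀ ha hp c x.2.2 hca
          rw [hx, this] at hpos
          exact absurd hpos (lt_irrefl 0)
        show Qprob A E' π * E' π (some x.1) * _ = Qprob A E π * E π (some x.1) * _
        rw [hE's, if_pos hπlen, if_neg hnotinp,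
          Qprob_congr A E' E k hE'low π (le_of_eq hπlen)]
    have houtA : (fun σ => traceProb A E' σ) ∈ outcont (fun σ => traceProb A Ek σ) A k := by
      refine ⟨⟨E', hE'adv, hE'halt, fun σ => rfl⟩, ?_, ?_⟩
      · intro σ hσ
        show traceProb A Ek σ = traceProb A E' σ
        rw [hHk_low σ (le_of_eq hσ), hHout_low σ (le_of_eq hσ)]
      · intro σ a hσ ha
        exact hf σ hσ a ha
    have houtB := hAB k _ hHk houtA
    obtain ⟨⟨F, hFadv, hFhalt, hFdef0⟩, -, -⟩ := houtB
    have hFdef : ∀ σ, traceProb A E' σ = traceProb B F σ := hFdef0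
    set M : List L → ℝ := fun σ =>
      ∑ a ∈ Finset.univ.filter (· ∈ A.inputs), traceProb A E (σ ++ [a]) with hM
    set AV : List L → ℝ := fun σ =>
      traceProb A E σ - ∑ c ∈ Finset.univ.filter (· ∉ A.inputs), traceProb A E (σ ++ [c]) with hAVdef
    have hMAV : ∀ σ : List L, M σ ≤ AV σ := by
      intro σ
      have h0 : 0 ≤ ∑ π ∈ (pathsOfLength A σ.length).filter
          (fun π => ValidPath A π ∧ ptrace π = σ), Qprob A E π * E π none :=
        Finset.sum_nonneg fun π _ => mul_nonneg (Qprob_nonneg A E hE π) (hE.1 π none)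
      rw [halting_mass A E hE σ] at h0
      have hsum := Finset.sum_filter_add_sum_filter_not Finset.univ (· ∈ A.inputs)
        (fun c => traceProb A E (σ ++ [c]))
      simp only [hM, hAVdef]
      linarith [hsum]
    have hMnn : ∀ σ : List L, 0 ≤ M σ :=
      fun σ => Finset.sum_nonneg fun a _ => traceProb_nonneg A E hE _
    have htermM : ∀ (σ : List L) (a : L), a ∈ A.inputs → traceProb A E (σ ++ [a]) ≤ M σ := by
      intro σ a ha
      simp only [hM]
      exact Finset.single_le_sum (f := fun c => traceProb A E (σ ++ [c]))
        (fun c _ => traceProb_nonneg A E hE _)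
        (Finset.mem_filter.mpr ⟨Finset.mem_univ a, ha⟩)
    have hAVF : ∀ σ : List L, σ.length = k →
        ∑ π ∈ (pathsOfLength B σ.length).filter
          (fun π => ValidPath B π ∧ ptrace π = σ), Qprob B F π * F π none = AV σ := by
      intro σ hσ
      rw [halting_mass B F hFadv σ]
      have h1 : traceProb B F σ = traceProb A E σ := by
        rw [← hFdef σ, hHout_low σ (le_of_eq hσ)]
      have h2 : ∀ c : L, traceProb B F (σ ++ [c]) =
          if c ∈ A.inputs then 0 else traceProb A E (σ ++ [c]) := by
        intro c
        rw [← hFdef]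
        by_cases hc : c ∈ A.inputs
        · rw [if_pos hc]; exact hf σ hσ c hc
        · rw [if_neg hc]; exact hg σ hσ c hc
      rw [h1, Finset.sum_congr rfl fun c _ => h2 c]
      simp only [hAVdef]
      have h3 : ∑ c ∈ Finset.univ.filter (· ∉ A.inputs), traceProb A E (σ ++ [c])
          = ∑ c : L, if c ∈ A.inputs then 0 else traceProb A E (σ ++ [c]) := by
        rw [Finset.sum_filter]
        refine Finset.sum_congr rfl fun c _ => ?_
        by_cases hc : c ∈ A.inputs <;> simp [hc]
      rw [h3]
    have hselspec : ∀ (s : S2) (a : L) (h : a ∈ B.inputs),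
        B.src (hB s a h).choose = s ∧ ∃ s', 0 < B.dist (hB s a h).choose (a, s') := by
      intro s a h
      obtain ⟨s', h1, h2⟩ := (hB s a h).choose_spec
      exact ⟨h1, s', h2⟩
    set add : PPath S2 L T2 → T2 → ℝ := fun π t =>
      ∑ a : L, if h : a ∈ B.inputs then
          (if (hB (lastState B π) a h).choose = t then traceProb A E (ptrace π ++ [a]) else 0)
        else 0 with haddDef
    have hadd_nn : ∀ π t, 0 ≤ add π t := by
      intro π t
      refine Finset.sum_nonneg fun a _ => ?_
      by_cases h : a ∈ B.inputs
      · rw [dif_pos h]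
        by_cases h2 : (hB (lastState B π) a h).choose = t
        · rw [if_pos h2]; exact traceProb_nonneg A E hE _
        · rw [if_neg h2]
      · rw [dif_neg h]
    have hadd_sum : ∀ π, ∑ t, add π t = M (ptrace π) := by
      intro π
      simp only [haddDef]
      rw [Finset.sum_comm]
      simp only [hM]
      rw [Finset.sum_filter]
      refine Finset.sum_congr rfl fun a _ => ?_
      by_cases h : a ∈ B.inputs
      · simp only [dif_pos h]
        rw [Finset.sum_ite_eq, if_pos (Finset.mem_univ _), if_pos (by rw [hin]; exact h)]
      · simp only [dif_neg h]
        rw [Finset.sum_const_zero, if_neg (by rw [hin]; exact h)]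
    have hadd_w : ∀ (π : PPath S2 L T2) (c : L),
        ∑ t, add π t * (∑ s' : S2, B.dist t (c, s'))
          = if c ∈ A.inputs then traceProb A E (ptrace π ++ [c]) else 0 := by
      intro π c
      simp only [haddDef]
      have hswap : ∑ t, (∑ a : L, if h : a ∈ B.inputs then
            (if (hB (lastState B π) a h).choose = t then traceProb A E (ptrace π ++ [a]) else 0)
          else 0) * (∑ s' : S2, B.dist t (c, s'))
          = ∑ a : L, ∑ t, (if h : a ∈ B.inputs then
            (if (hB (lastState B π) a h).choose = t then traceProb A E (ptrace π ++ [a]) else 0)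
          else 0) * (∑ s' : S2, B.dist t (c, s')) := by
        rw [← Finset.sum_comm]
        exact Finset.sum_congr rfl fun t _ => Finset.sum_mul _ _ _
      rw [hswap]
      have hperA : ∀ a : L, (∑ t, (if h : a ∈ B.inputs then
            (if (hB (lastState B π) a h).choose = t then traceProb A E (ptrace π ++ [a]) else 0)
          else 0) * (∑ s' : S2, B.dist t (c, s')))
          = if a = c ∧ c ∈ B.inputs then traceProb A E (ptrace π ++ [c]) else 0 := by
        intro a
        by_cases h : a ∈ B.inputs
        · simp only [dif_pos h]
          have : ∀ t, (if (hB (lastState B π) a h).choose = t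
                then traceProb A E (ptrace π ++ [a]) else 0) * (∑ s' : S2, B.dist t (c, s'))
              = if (hB (lastState B π) a h).choose = t
                then traceProb A E (ptrace π ++ [a]) * (∑ s' : S2, B.dist t (c, s')) else 0 := by
            intro t
            by_cases h2 : (hB (lastState B π) a h).choose = t <;> simp [h2]
          rw [Finset.sum_congr rfl fun t _ => this t, Finset.sum_ite_eq,
            if_pos (Finset.mem_univ _)]
          obtain ⟨hsrc, s₀, hpos⟩ := hselspec (lastState B π) a h
          by_cases hca : a = c
          · subst hca
            rw [input_weight_one B _ a h s₀ hpos, mul_one, if_pos ⟨rfl, h⟩]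
          · rw [input_weight_zero B _ a h s₀ hpos c (fun hc => hca hc.symm), mul_zero,
              if_neg (fun hc => hca hc.1)]
        · simp only [dif_neg h, zero_mul, Finset.sum_const_zero]
          rw [if_neg]
          rintro ⟨rfl, hc⟩
          exact h hc
      rw [Finset.sum_congr rfl fun a _ => hperA a]
      by_cases hc : c ∈ B.inputs
      · have : ∀ a : L, (if a = c ∧ c ∈ B.inputs then traceProb A E (ptrace π ++ [c]) else 0)
            = if a = c then traceProb A E (ptrace π ++ [c]) else 0 := by
          intro a
          by_cases ha : a = c <;> simp [ha, hc]
        rw [Finset.sum_congr rfl fun a _ => this a, Finset.sum_ite_eq',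
          if_pos (Finset.mem_univ _), if_pos (by rw [hin]; exact hc)]
      · have : ∀ a : L, (if a = c ∧ c ∈ B.inputs then traceProb A E (ptrace π ++ [c]) else 0) = 0 := by
          intro a
          rw [if_neg (fun hx => hc hx.2)]
        rw [Finset.sum_congr rfl fun a _ => this a, Finset.sum_const_zero,
          if_neg (by rw [hin]; exact hc)]
    set F' : PPath S2 L T2 → Option T2 → ℝ := fun π o =>
      if π.length = k ∧ ValidPath B π ∧ 0 < AV (ptrace π) then
        (match o with
          | some t => F π (some t) + F π none / AV (ptrace π) * add π t
          | none => F π none * (1 - M (ptrace π) / AV (ptrace π)))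
      else F π o with hF'def
    have hF's : ∀ π t, F' π (some t) =
        if π.length = k ∧ ValidPath B π ∧ 0 < AV (ptrace π) then
          F π (some t) + F π none / AV (ptrace π) * add π t
        else F π (some t) := fun _ _ => rfl
    have hF'n : ∀ π, F' π none =
        if π.length = k ∧ ValidPath B π ∧ 0 < AV (ptrace π) then
          F π none * (1 - M (ptrace π) / AV (ptrace π))
        else F π none := fun _ => rfl
    have hF'adv : IsAdversary B F' := by
      refine ⟨?_, ?_, ?_⟩
      · intro π o
        cases o with
        | none =>
          rw [hF'n]
          by_cases hc : π.length = k ∧ ValidPath B π ∧ 0 < AV (ptrace π)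
          · rw [if_pos hc]
            have h1 : M (ptrace π) / AV (ptrace π) ≤ 1 :=
              (div_le_one hc.2.2).mpr (hMAV (ptrace π))
            exact mul_nonneg (hFadv.1 π none) (by linarith)
          · rw [if_neg hc]; exact hFadv.1 π none
        | some t =>
          rw [hF's]
          by_cases hc : π.length = k ∧ ValidPath B π ∧ 0 < AV (ptrace π)
          · rw [if_pos hc]
            exact add_nonneg (hFadv.1 π (some t))
              (mul_nonneg (div_nonneg (hFadv.1 π none) (le_of_lt hc.2.2)) (hadd_nn π t))
          · rw [if_neg hc]; exact hFadv.1 π (some t)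
      · intro π t h
        rw [hF's] at h
        by_cases hc : π.length = k ∧ ValidPath B π ∧ 0 < AV (ptrace π)
        · rw [if_pos hc] at h
          by_cases hF : 0 < F π (some t)
          · exact hFadv.2.1 π t hF
          · have hF0 : F π (some t) = 0 :=
              le_antisymm (not_lt.mp hF) (hFadv.1 π (some t))
            rw [hF0, zero_add] at h
            have hq : 0 ≤ F π none / AV (ptrace π) :=
              div_nonneg (hFadv.1 π none) (le_of_lt hc.2.2)
            have hpos : 0 < add π t := by
              by_contra hng
              push_neg at hng
              have : F π none / AV (ptrace π) * add π t ≤ 0 :=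
                mul_nonpos_of_nonneg_of_nonpos hq hng
              linarith
            have hex : ∃ a : L, 0 < (if h2 : a ∈ B.inputs then
                (if (hB (lastState B π) a h2).choose = t
                  then traceProb A E (ptrace π ++ [a]) else 0) else 0) := by
              by_contra hno
              push_neg at hno
              have : add π t ≤ 0 := by
                simp only [haddDef]
                exact Finset.sum_nonpos fun a _ => hno a
              linarith
            obtain ⟨a, hapos⟩ := hex
            by_cases hab : a ∈ B.inputs
            · rw [dif_pos hab] at hapos
              by_cases he : (hB (lastState B π) a hab).choose = t
              · rw [← he]; exact (hselspec (lastState B π) a hab).1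
              · rw [if_neg he] at hapos; exact absurd hapos (lt_irrefl 0)
            · rw [dif_neg hab] at hapos; exact absurd hapos (lt_irrefl 0)
        · rw [if_neg hc] at h; exact hFadv.2.1 π t h
      · intro π
        by_cases hc : π.length = k ∧ ValidPath B π ∧ 0 < AV (ptrace π)
        · have hs : ∑ t, F' π (some t)
              = (∑ t, F π (some t)) + F π none / AV (ptrace π) * M (ptrace π) := by
            rw [Finset.sum_congr rfl fun t _ => by rw [hF's, if_pos hc]]
            rw [Finset.sum_add_distrib, ← Finset.mul_sum, hadd_sum]
          rw [hF'n, if_pos hc, hs]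
          have : F π none * (1 - M (ptrace π) / AV (ptrace π))
              + ((∑ t, F π (some t)) + F π none / AV (ptrace π) * M (ptrace π))
              = F π none + ∑ t, F π (some t) := by ring
          rw [this]
          exact hFadv.2.2 π
        · have hs : ∑ t, F' π (some t) = ∑ t, F π (some t) :=
            Finset.sum_congr rfl fun t _ => by rw [hF's, if_neg hc]
          rw [hF'n, if_neg hc, hs]
          exact hFadv.2.2 π
    have hF'halt : haltsAfter F' (k + 1) := by
      intro π h
      rw [hF'n, if_neg (fun hc => by omega)]
      exact hFhalt π h
    have hF'low : ∀ π : PPath S2 L T2, π.length < k → ∀ o, F' π o = F π o := by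
      intro π h o
      simp only [hF'def]
      exact if_neg (fun hc => by omega)
    refine ⟨F', hF'adv, hF'halt, ?_⟩
    intro σ
    rw [hHdef σ]
    rcases lt_trichotomy σ.length (k + 1) with hl | hl | hl
    · have hle : σ.length ≤ k := by omega
      rw [traceProb_congr B F' F k hF'low σ hle, ← hFdef σ, hHout_low σ hle]
    · obtain (rfl | ⟨σ₀, c, rfl⟩) := σ.eq_nil_or_concat
      · simp at hl
      · rw [List.concat_eq_append] at hl ⊢
        have hσ₀ : σ₀.length = k := by
          simp only [List.length_append, List.length_singleton] at hl
          omega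
        have hBF : traceProb B F (σ₀ ++ [c]) =
            if c ∈ A.inputs then 0 else traceProb A E (σ₀ ++ [c]) := by
          rw [← hFdef]
          by_cases hcin : c ∈ A.inputs
          · rw [if_pos hcin]; exact hf σ₀ hσ₀ c hcin
          · rw [if_neg hcin]; exact hg σ₀ hσ₀ c hcin
        rw [key_identity B F' hF'adv σ₀ c]
        have hQ : ∀ π ∈ (pathsOfLength B σ₀.length).filter
            (fun π => ValidPath B π ∧ ptrace π = σ₀), Qprob B F' π = Qprob B F π := by
          intro π hπ
          have := (mem_pathsOfLength B _ π).mp (Finset.mem_filter.mp hπ).1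
          exact Qprob_congr B F' F k hF'low π (by omega)
        by_cases hav : 0 < AV σ₀
        · have hterm : ∀ π ∈ (pathsOfLength B σ₀.length).filter
              (fun π => ValidPath B π ∧ ptrace π = σ₀),
              Qprob B F' π * ∑ t, F' π (some t) * (∑ s' : S2, B.dist t (c, s'))
              = Qprob B F π * (∑ t, F π (some t) * ∑ s' : S2, B.dist t (c, s'))
                + (if c ∈ A.inputs then traceProb A E (σ₀ ++ [c]) else 0) / AV σ₀
                  * (Qprob B F π * F π none) := by
            intro π hπ
            obtain ⟨hm, hv, ht⟩ := Finset.mem_filter.mp hπ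
            have hlenπ : π.length = k := by
              rw [(mem_pathsOfLength B _ π).mp hm]; exact hσ₀
            have hc : π.length = k ∧ ValidPath B π ∧ 0 < AV (ptrace π) :=
              ⟨hlenπ, hv, by rw [ht]; exact hav⟩
            rw [hQ π hπ]
            have hsplit : ∑ t, F' π (some t) * (∑ s' : S2, B.dist t (c, s'))
                = (∑ t, F π (some t) * ∑ s' : S2, B.dist t (c, s'))
                  + F π none / AV (ptrace π)
                    * (if c ∈ A.inputs then traceProb A E (ptrace π ++ [c]) else 0) := by
              rw [Finset.sum_congr rfl fun t _ => by rw [hF's, if_pos hc]]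
              rw [Finset.sum_congr rfl fun t _ => add_mul _ _ _, Finset.sum_add_distrib]
              congr 1
              rw [Finset.sum_congr rfl fun t _ => mul_assoc _ _ _, ← Finset.mul_sum,
                hadd_w π c]
            rw [hsplit, ht]
            ring
          rw [Finset.sum_congr rfl hterm, Finset.sum_add_distrib, ← Finset.mul_sum,
            ← key_identity B F hFadv σ₀ c, hAVF σ₀ hσ₀, hBF]
          by_cases hcin : c ∈ A.inputs
          · rw [if_pos hcin, if_pos hcin, zero_add, div_mul_cancel₀ _ (ne_of_gt hav)]
          · rw [if_neg hcin, if_neg hcin, zero_div, zero_mul, add_zero]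
        · have hterm2 : ∀ π ∈ (pathsOfLength B σ₀.length).filter
              (fun π => ValidPath B π ∧ ptrace π = σ₀),
              Qprob B F' π * ∑ t, F' π (some t) * (∑ s' : S2, B.dist t (c, s'))
              = Qprob B F π * ∑ t, F π (some t) * (∑ s' : S2, B.dist t (c, s')) := by
            intro π hπ
            obtain ⟨hm, hv, ht⟩ := Finset.mem_filter.mp hπ
            rw [hQ π hπ]
            congr 1
            refine Finset.sum_congr rfl fun t _ => ?_
            rw [hF's, if_neg (fun hcnd => hav (ht ▸ hcnd.2.2))]
          rw [Finset.sum_congr rfl hterm2, ← key_identity B F hFadv σ₀ c, hBF]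
          by_cases hcin : c ∈ A.inputs
          · rw [if_pos hcin]
            have h1 := htermM σ₀ c hcin
            have h2 := hMAV σ₀
            have h3 := traceProb_nonneg A E hE (σ₀ ++ [c])
            have h4 : AV σ₀ ≤ 0 := not_lt.mp hav
            linarith
          · rw [if_neg hcin]
    · rw [traceProb_eq_zero_of_halt A E hE (k+1) hhalt σ hl,
        traceProb_eq_zero_of_halt B F' hF'adv (k+1) hF'halt σ hl]
theorem stmt11 {S1 T1 S2 T2 S3 T3 : Type}
    [Fintype S1] [Fintype T1] [Fintype S2] [Fintype T2] [Fintype S3] [Fintype T3]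
    (A : pQTS S1 L T1) (B : pQTS S2 L T2) (C : pQTS S3 L T3)
    (hinAB : A.inputs = B.inputs) (hinBC : B.inputs = C.inputs)
    (hdAB : A.delta = B.delta) (hdBC : B.delta = C.delta)
    (hA : inputEnabled A) (hB : inputEnabled B)
    (hAB : pioco A B) (hBC : pioco B C) :
    pioco A C := by
  intro k H hHC H' hH'A
  obtain ⟨hH'trdA, hpre, hzero⟩ := hH'A
  have hH'trdB : H' ∈ trd B (k + 1) := trd_mono A B hinAB hB hAB (k + 1) hH'trdA
  have hH'B : H' ∈ outcont H B k :=
    ⟨hH'trdB, hpre, fun σ a hσ ha => hzero σ a hσ (by rw [hinAB]; exact ha)⟩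
  exact hBC k H hHC hH'B
end
end
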